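/- At every point x of the open set Ω_3 = (0,π)⁶ ∪ ((0,π)³ × (π,2π)³) ⊆ ℝ⁶, the Fréchet derivative of the map g_3 : ℝ⁶ → ℝ³ is surjective (has full rank 3); in particular 0 is a regular value of the restriction of g_3 to Ω_3. -/

import Mathlib

open Real

/-- The spherical law of cosines map `g_3 : ℝ⁶ → ℝ³`, with sides `(a,b,c) = (x 0, x 1, x 2)`
and angles `(α,β,γ) = (x 3, x 4, x 5)`. -/
noncomputable def gThree (x : Fin 6 → ℝ) : Fin 3 → ℝ :=
  ![Real.cos (x 1) * Real.cos (x 2) + Real.sin (x 1) * Real.sin (x 2) * Real.cos (x 3)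
      - Real.cos (x 0),
    Real.cos (x 2) * Real.cos (x 0) + Real.sin (x 2) * Real.sin (x 0) * Real.cos (x 4)
      - Real.cos (x 1),
    Real.cos (x 0) * Real.cos (x 1) + Real.sin (x 0) * Real.sin (x 1) * Real.cos (x 5)
      - Real.cos (x 2)]

lemma sin_ne_zero_of_mem (t : ℝ) (h : t ∈ Set.Ioo 0 π ∨ t ∈ Set.Ioo π (2 * π)) :
    Real.sin t ≠ 0 := by
  rcases h with h | h
  · exact ne_of_gt (Real.sin_pos_of_pos_of_lt_pi h.1 h.2)
  · have h1 : 0 < Real.sin (t - π) :=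
      Real.sin_pos_of_pos_of_lt_pi (by linarith [h.1]) (by linarith [h.2])
    rw [Real.sin_sub_pi] at h1
    linarith


set_option maxHeartbeats 1000000 in
/-- at every point of `Ω_3 = (0,π)⁶ ∪ ((0,π)³ × (π,2π)³)` the Fréchet
derivative of `g_3` is surjective (full rank 3); in particular `0` is a regular value
of the restriction of `g_3` to `Ω_3`. -/
theorem stmt_5 (x : Fin 6 → ℝ)
    (hx : (∀ i, x i ∈ Set.Ioo 0 π) ∨
      ((x 0 ∈ Set.Ioo 0 π ∧ x 1 ∈ Set.Ioo 0 π ∧ x 2 ∈ Set.Ioo 0 π) ∧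
        (x 3 ∈ Set.Ioo π (2 * π) ∧ x 4 ∈ Set.Ioo π (2 * π) ∧ x 5 ∈ Set.Ioo π (2 * π)))) :
    Function.Surjective ⇑(fderiv ℝ gThree x) := by
  -- positivity of side sines, nonvanishing of angle sines
  have hs0 : 0 < Real.sin (x 0) := by
    rcases hx with h | h
    · exact Real.sin_pos_of_pos_of_lt_pi (h 0).1 (h 0).2
    · exact Real.sin_pos_of_pos_of_lt_pi h.1.1.1 h.1.1.2
  have hs1 : 0 < Real.sin (x 1) := by
    rcases hx with h | h
    · exact Real.sin_pos_of_pos_of_lt_pi (h 1).1 (h 1).2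
    · exact Real.sin_pos_of_pos_of_lt_pi h.1.2.1.1 h.1.2.1.2
  have hs2 : 0 < Real.sin (x 2) := by
    rcases hx with h | h
    · exact Real.sin_pos_of_pos_of_lt_pi (h 2).1 (h 2).2
    · exact Real.sin_pos_of_pos_of_lt_pi h.1.2.2.1 h.1.2.2.2
  have ha3 : Real.sin (x 3) ≠ 0 := by
    apply sin_ne_zero_of_mem; rcases hx with h | h
    exacts [Or.inl (h 3), Or.inr h.2.1]
  have ha4 : Real.sin (x 4) ≠ 0 := by
    apply sin_ne_zero_of_mem; rcases hx with h | h
    exacts [Or.inl (h 4), Or.inr h.2.2.1]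
  have ha5 : Real.sin (x 5) ≠ 0 := by
    apply sin_ne_zero_of_mem; rcases hx with h | h
    exacts [Or.inl (h 5), Or.inr h.2.2.2]
  -- elementary derivatives
  have hcos : ∀ i : Fin 6, HasFDerivAt (fun y : Fin 6 → ℝ => Real.cos (y i))
      ((-Real.sin (x i)) • ContinuousLinearMap.proj (R := ℝ) (φ := fun _ : Fin 6 => ℝ) i) x :=
    fun i => (Real.hasDerivAt_cos (x i)).comp_hasFDerivAt (f := fun y : Fin 6 → ℝ => y i) x (hasFDerivAt_apply i x)
  have hsin : ∀ i : Fin 6, HasFDerivAt (fun y : Fin 6 → ℝ => Real.sin (y i))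
      ((Real.cos (x i)) • ContinuousLinearMap.proj (R := ℝ) (φ := fun _ : Fin 6 => ℝ) i) x :=
    fun i => (Real.hasDerivAt_sin (x i)).comp_hasFDerivAt (f := fun y : Fin 6 → ℝ => y i) x (hasFDerivAt_apply i x)
  -- component derivatives, with evaluations at the angle directions
  set d0 : ℝ := -(Real.sin (x 1) * Real.sin (x 2) * Real.sin (x 3)) with hd0
  set d1 : ℝ := -(Real.sin (x 2) * Real.sin (x 0) * Real.sin (x 4)) with hd1
  set d2 : ℝ := -(Real.sin (x 0) * Real.sin (x 1) * Real.sin (x 5)) with hd2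
  have H0 : ∃ D : (Fin 6 → ℝ) →L[ℝ] ℝ, HasFDerivAt (fun y => gThree y 0) D x ∧
      D (Pi.single 3 1) = d0 ∧ D (Pi.single 4 1) = 0 ∧ D (Pi.single 5 1) = 0 := by
    refine ⟨_, (((hcos 1).mul (hcos 2)).add (((hsin 1).mul (hsin 2)).mul (hcos 3))).sub
      (hcos 0), ?_, ?_, ?_⟩ <;>
    · simp [Pi.single_apply, hd0]; try ring
  have H1 : ∃ D : (Fin 6 → ℝ) →L[ℝ] ℝ, HasFDerivAt (fun y => gThree y 1) D x ∧
      D (Pi.single 3 1) = 0 ∧ D (Pi.single 4 1) = d1 ∧ D (Pi.single 5 1) = 0 := by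
    refine ⟨_, (((hcos 2).mul (hcos 0)).add (((hsin 2).mul (hsin 0)).mul (hcos 4))).sub
      (hcos 1), ?_, ?_, ?_⟩ <;>
    · simp [Pi.single_apply, hd1]; try ring
  have H2 : ∃ D : (Fin 6 → ℝ) →L[ℝ] ℝ, HasFDerivAt (fun y => gThree y 2) D x ∧
      D (Pi.single 3 1) = 0 ∧ D (Pi.single 4 1) = 0 ∧ D (Pi.single 5 1) = d2 := by
    refine ⟨_, (((hcos 0).mul (hcos 1)).add (((hsin 0).mul (hsin 1)).mul (hcos 5))).sub
      (hcos 2), ?_, ?_, ?_⟩ <;>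
    · simp [Pi.single_apply, hd2]; try ring
  obtain ⟨D0, hD0, e03, e04, e05⟩ := H0
  obtain ⟨D1, hD1, e13, e14, e15⟩ := H1
  obtain ⟨D2, hD2, e23, e24, e25⟩ := H2
  have hG : HasFDerivAt gThree (ContinuousLinearMap.pi ![D0, D1, D2]) x := by
    refine hasFDerivAt_pi.2 ?_
    intro i
    fin_cases i
    · exact hD0
    · exact hD1
    · exact hD2
  rw [hG.fderiv]
  have hd0' : d0 ≠ 0 := by
    simp only [hd0, neg_ne_zero]
    exact mul_ne_zero (mul_ne_zero hs1.ne' hs2.ne') ha3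
  have hd1' : d1 ≠ 0 := by
    simp only [hd1, neg_ne_zero]
    exact mul_ne_zero (mul_ne_zero hs2.ne' hs0.ne') ha4
  have hd2' : d2 ≠ 0 := by
    simp only [hd2, neg_ne_zero]
    exact mul_ne_zero (mul_ne_zero hs0.ne' hs1.ne') ha5
  intro y
  refine ⟨(y 0 / d0) • (Pi.single 3 1 : Fin 6 → ℝ) + (y 1 / d1) • (Pi.single 4 1 : Fin 6 → ℝ) + (y 2 / d2) • (Pi.single 5 1 : Fin 6 → ℝ), ?_⟩
  funext i
  fin_cases i <;>
    simp [ContinuousLinearMap.pi_apply, map_add, map_smul, e03, e04, e05, e13, e14, e15,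
      e23, e24, e25, div_mul_cancel₀, hd0', hd1', hd2']
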